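/- Let p ∈ P_{a,b}, let l ≥ 1, and suppose n − p(2l+1) > p(2l) and m − p(2l+2) ≤ p(2l+1). Let p' be the sequence equal to p except p'(2l+1) = p(2l+1) + 1. Then p' ∈ P_{a,b}, the four identities h1(p(2l+3),p(2l+2),p(2l+1)+1) − h1(p(2l+3),p(2l+2),p(2l+1)) = −1, h2(p(2l+2),p(2l+1)+1,p(2l)) − h2(p(2l+2),p(2l+1),p(2l)) = −1, h1(p(2l+1)+1,p(2l),p(2l−1)) − h1(p(2l+1),p(2l),p(2l−1)) = 0, and h3(p(2l+1)+1,p(2l)) − h3(p(2l+1),p(2l)) = 1 hold, and consequently h(p') = h(p) + 1. -/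
import Mathlib


namespace Stmt6

/-- The ground-state path value `\bar p(s; a, b)`. -/
def barp (m n a b : ℤ) (s : ℕ) : ℤ :=
  if s % 2 = 1 then n - b else if s % 4 = 0 then a + b else m - n - a + b

/-- Membership in the path space `P_{a,b}`. -/
def IsPath (m n a b : ℤ) (p : ℕ → ℤ) : Prop :=
  (∀ s : ℕ, 1 ≤ s → 0 ≤ p s ∧ p s ≤ (if s % 2 = 1 then n else m)) ∧
  ∃ S : ℕ, ∀ s ≥ S, p s = barp m n a b s

/-- The eventual (ground-state) weight sequence `ā(s)`. -/
def abar (m n a b : ℤ) (s : ℕ) : ℤ :=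
  if s % 4 = 1 then a + b
  else if s % 4 = 2 then n + a - b
  else if s % 4 = 3 then m - n - a + b
  else m - a - b

/-- `A` is the weight sequence `a_p` attached to the path `p`. -/
def IsWeightSeq (m n a b : ℤ) (p A : ℕ → ℤ) : Prop :=
  (∀ s : ℕ, 1 ≤ s → A s = A (s + 1) + (if s % 2 = 1 then n else m) - 2 * p s) ∧
  ∃ S : ℕ, ∀ s ≥ S, A s = abar m n a b s

/-- The admissibility inequalities for the weight sequence `A = a_p`. -/
def AdmIneq (m n : ℤ) (p A : ℕ → ℤ) : Prop :=
  ∀ s : ℕ, 1 ≤ s →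
    p s ≤ A (s + 1) ∧ (if s % 2 = 1 then n else m) - p s ≤ m - A (s + 1)

/-- `{a}_b` : `a` if `a ≤ b`, and `2b - a` if `a ≥ b`. -/
def curly (x c : ℤ) : ℤ := if x ≤ c then x else 2 * c - x

def h1 (m n i j k : ℤ) : ℤ :=
  if i + j ≤ min m n then curly (k + j) n
  else if m ≤ i + j ∧ i + j ≤ n then curly (k + i + 2 * j - m) n
  else if n ≤ i + j ∧ i + j ≤ m then curly (k + n - i) n
  else curly (k + n - m + j) n

def h2 (m n i j k : ℤ) : ℤ :=
  if j + k ≤ min m n then curly (i + j) m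
  else if m ≤ j + k ∧ j + k ≤ n then curly (i + m - k) m
  else if n ≤ j + k ∧ j + k ≤ m then curly (i + k + 2 * j - n) m
  else curly (i + j + m - n) m

def h3 (m n i j : ℤ) : ℤ :=
  if i + j ≤ min m n then i + j
  else if m ≤ i + j ∧ i + j ≤ n then m
  else if n ≤ i + j ∧ i + j ≤ m then n
  else m + n - i - j

/-- The `s`-th term in the sum defining the crystal energy. -/
def eterm (m n a b : ℤ) (p : ℕ → ℤ) (s : ℕ) : ℤ :=
  (h1 m n (p (2 * s + 1)) (p (2 * s)) (p (2 * s - 1))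
    - h1 m n (barp m n a b (2 * s + 1)) (barp m n a b (2 * s)) (barp m n a b (2 * s - 1)))
  + (h2 m n (p (2 * s + 2)) (p (2 * s + 1)) (p (2 * s))
    - h2 m n (barp m n a b (2 * s + 2)) (barp m n a b (2 * s + 1)) (barp m n a b (2 * s)))
  + 2 * (h3 m n (p (2 * s + 1)) (p (2 * s))
    - h3 m n (barp m n a b (2 * s + 1)) (barp m n a b (2 * s)))

/-- `H` is the crystal energy `h(p)`; the sum has finitely many nonzero terms, so the
partial sums are eventually constant. -/
def IsEnergy (m n a b : ℤ) (p : ℕ → ℤ) (H : ℤ) : Prop :=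
  ∃ S0 : ℕ, ∀ S ≥ S0, H = -∑ s ∈ Finset.Icc 1 S, (s : ℤ) * eterm m n a b p s

/-- The RSOS path `r_p` read off from the weight sequence `A = a_p`. -/
def rOf (m : ℤ) (A : ℕ → ℤ) (s : ℕ) : ℤ :=
  if s % 2 = 1 then A (2 * s - 1) else m - A (2 * s - 1)

theorem stmt6 (m n a b : ℤ) (hmn : n < m) (hn : 1 ≤ n)
    (ha0 : 0 ≤ a) (ha1 : a ≤ m - n) (hb0 : 0 ≤ b) (hb1 : b ≤ n)
    (p : ℕ → ℤ) (hp : IsPath m n a b p) (l : ℕ) (hl : 1 ≤ l)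
    (hup : p (2 * l) < n - p (2 * l + 1))
    (hdown : m - p (2 * l + 2) ≤ p (2 * l + 1)) :
    IsPath m n a b (Function.update p (2 * l + 1) (p (2 * l + 1) + 1)) ∧
    h1 m n (p (2 * l + 3)) (p (2 * l + 2)) (p (2 * l + 1) + 1)
      - h1 m n (p (2 * l + 3)) (p (2 * l + 2)) (p (2 * l + 1)) = -1 ∧
    h2 m n (p (2 * l + 2)) (p (2 * l + 1) + 1) (p (2 * l))
      - h2 m n (p (2 * l + 2)) (p (2 * l + 1)) (p (2 * l)) = -1 ∧
    h1 m n (p (2 * l + 1) + 1) (p (2 * l)) (p (2 * l - 1))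
      - h1 m n (p (2 * l + 1)) (p (2 * l)) (p (2 * l - 1)) = 0 ∧
    h3 m n (p (2 * l + 1) + 1) (p (2 * l))
      - h3 m n (p (2 * l + 1)) (p (2 * l)) = 1 ∧
    (∀ H H' : ℤ, IsEnergy m n a b p H →
      IsEnergy m n a b (Function.update p (2 * l + 1) (p (2 * l + 1) + 1)) H' →
      H' = H + 1) := by
  have hbd := hp.1
  have B0 := hbd (2*l) (by omega)
  rw [if_neg (by omega : ¬ (2*l) % 2 = 1)] at B0
  have B1 := hbd (2*l+1) (by omega)
  rw [if_pos (by omega : (2*l+1) % 2 = 1)] at B1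
  have B2 := hbd (2*l+2) (by omega)
  rw [if_neg (by omega : ¬ (2*l+2) % 2 = 1)] at B2
  have B3 := hbd (2*l+3) (by omega)
  rw [if_pos (by omega : (2*l+3) % 2 = 1)] at B3
  have Bm := hbd (2*l-1) (by omega)
  rw [if_pos (by omega : (2*l-1) % 2 = 1)] at Bm
  have I1 : h1 m n (p (2*l+3)) (p (2*l+2)) (p (2*l+1) + 1)
      - h1 m n (p (2*l+3)) (p (2*l+2)) (p (2*l+1)) = -1 := by
    simp only [h1, curly]; split_ifs <;> omega
  have I2 : h2 m n (p (2*l+2)) (p (2*l+1) + 1) (p (2*l))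
      - h2 m n (p (2*l+2)) (p (2*l+1)) (p (2*l)) = -1 := by
    simp only [h2]
    rw [if_pos (by omega : p (2*l+1) + 1 + p (2*l) ≤ min m n),
      if_pos (by omega : p (2*l+1) + p (2*l) ≤ min m n)]
    simp only [curly]; split_ifs <;> omega
  have I3 : h1 m n (p (2*l+1) + 1) (p (2*l)) (p (2*l-1))
      - h1 m n (p (2*l+1)) (p (2*l)) (p (2*l-1)) = 0 := by
    simp only [h1]
    rw [if_pos (by omega : p (2*l+1) + 1 + p (2*l) ≤ min m n),
      if_pos (by omega : p (2*l+1) + p (2*l) ≤ min m n), sub_self]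
  have I4 : h3 m n (p (2*l+1) + 1) (p (2*l))
      - h3 m n (p (2*l+1)) (p (2*l)) = 1 := by
    simp only [h3]
    rw [if_pos (by omega : p (2*l+1) + 1 + p (2*l) ≤ min m n),
      if_pos (by omega : p (2*l+1) + p (2*l) ≤ min m n)]
    ring
  refine ⟨?_, I1, I2, I3, I4, ?_⟩
  · obtain ⟨hbd', S, hS⟩ := hp
    refine ⟨?_, max S (2*l+2), ?_⟩
    · intro s hs
      by_cases hsl : s = 2*l+1
      · subst hsl
        rw [Function.update_self, if_pos (by omega : (2*l+1) % 2 = 1)]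
        omega
      · rw [Function.update_of_ne hsl]; exact hbd' s hs
    · intro s hs
      rw [Function.update_of_ne (by omega)]
      exact hS s (by omega)
  · intro H H' hH hH'
    set q := Function.update p (2*l+1) (p (2*l+1) + 1) with hqdef
    obtain ⟨S0, hS0⟩ := hH
    obtain ⟨S1, hS1⟩ := hH'
    have e0 := hS0 (max (max S0 S1) (l+1)) (by omega)
    have e1 := hS1 (max (max S0 S1) (l+1)) (by omega)
    set S := max (max S0 S1) (l+1) with hSdef
    have hlS : l + 1 ≤ S := by rw [hSdef]; omega
    have q0 : q (2*l) = p (2*l) := Function.update_of_ne (by omega) _ _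
    have q1 : q (2*l+1) = p (2*l+1) + 1 := Function.update_self _ _ _
    have q2 : q (2*l+2) = p (2*l+2) := Function.update_of_ne (by omega) _ _
    have q3 : q (2*l+3) = p (2*l+3) := Function.update_of_ne (by omega) _ _
    have q4 : q (2*l+4) = p (2*l+4) := Function.update_of_ne (by omega) _ _
    have qm : q (2*l-1) = p (2*l-1) := Function.update_of_ne (by omega) _ _
    have dl : eterm m n a b q l - eterm m n a b p l = 1 := by
      simp only [eterm, q0, q1, q2, qm]
      linarith [I2, I3, I4]
    have dl1 : eterm m n a b q (l+1) - eterm m n a b p (l+1) = -1 := by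
      have E1 : 2*(l+1)+1 = 2*l+3 := by omega
      have E2 : 2*(l+1)+2 = 2*l+4 := by omega
      have E3 : 2*(l+1) = 2*l+2 := by omega
      have E4 : 2*(l+1)-1 = 2*l+1 := by omega
      have E1' : 2*l+2+1 = 2*l+3 := by omega
      have E2' : 2*l+2+2 = 2*l+4 := by omega
      have E4' : 2*l+2-1 = 2*l+1 := by omega
      simp only [eterm, E1, E2, E3, E4, E1', E2', E4', q1, q2, q3, q4]
      linarith [I1]
    have key : ∀ s ∈ Finset.Icc 1 S, s ∉ ({l, l+1} : Finset ℕ) →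
        (s:ℤ) * (eterm m n a b q s - eterm m n a b p s) = 0 := by
      intro s hs hs'
      rw [Finset.mem_Icc] at hs
      simp only [Finset.mem_insert, Finset.mem_singleton, not_or] at hs'
      have a1 : q (2*s+1) = p (2*s+1) := Function.update_of_ne (by omega) _ _
      have a2 : q (2*s) = p (2*s) := Function.update_of_ne (by omega) _ _
      have a3 : q (2*s-1) = p (2*s-1) := Function.update_of_ne (by omega) _ _
      have a4 : q (2*s+2) = p (2*s+2) := Function.update_of_ne (by omega) _ _
      simp [eterm, a1, a2, a3, a4]
    have hsub : ({l, l+1} : Finset ℕ) ⊆ Finset.Icc 1 S := by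
      intro x hx
      simp only [Finset.mem_insert, Finset.mem_singleton] at hx
      rw [Finset.mem_Icc]
      rcases hx with h | h <;> omega
    have h := Finset.sum_subset hsub key
    rw [Finset.sum_pair (by omega : l ≠ l+1), dl, dl1] at h
    have h2 : ∑ s ∈ Finset.Icc 1 S, (s:ℤ) * (eterm m n a b q s - eterm m n a b p s)
        = (∑ s ∈ Finset.Icc 1 S, (s:ℤ) * eterm m n a b q s)
          - ∑ s ∈ Finset.Icc 1 S, (s:ℤ) * eterm m n a b p s := by
      rw [← Finset.sum_sub_distrib]
      apply Finset.sum_congr rfl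
      intro x _; ring
    rw [h2] at h
    push_cast at h
    linarith [e0, e1, h]

end Stmt6
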